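/- Under the subsonic condition sup_τ ‖p'(τ)‖ ≤ c₁ < c, the fixed-point equation c(t - τ) = ‖x - p(τ)‖ has exactly one solution τ(x,t) for every (x,t), and τ(x,t) ≤ t. -/

import Mathlib

theorem stmt1 (c c₁ : ℝ) (hc : 0 < c) (hc₁ : 0 ≤ c₁) (h : c₁ < c)
    (p : ℝ → EuclideanSpace ℝ (Fin 3)) (hp : ContDiff ℝ 1 p)
    (hsub : ∀ τ : ℝ, ‖deriv p τ‖ ≤ c₁)
    (x : EuclideanSpace ℝ (Fin 3)) (t : ℝ) :
    (∃! τ : ℝ, c * (t - τ) = ‖x - p τ‖) ∧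
      ∀ τ : ℝ, c * (t - τ) = ‖x - p τ‖ → τ ≤ t := by
  have hdiff : Differentiable ℝ p := hp.differentiable one_ne_zero
  have hplip : LipschitzWith ⟨c₁, hc₁⟩ p := by
    apply lipschitzWith_of_nnnorm_deriv_le hdiff
    intro τ
    exact_mod_cast hsub τ
  set K : NNReal := ⟨c₁ / c, div_nonneg hc₁ hc.le⟩ with hK
  have hK1 : K < 1 := by
    rw [← NNReal.coe_lt_coe]
    exact (div_lt_one hc).mpr h
  set g : ℝ → ℝ := fun τ => t - c⁻¹ * ‖x - p τ‖ with hg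
  have hglip : LipschitzWith K g := by
    intro a b
    simp only [edist_dist, hg]
    rw [← ENNReal.ofReal_coe_nnreal, ← ENNReal.ofReal_mul (by positivity)]
    apply ENNReal.ofReal_le_ofReal
    rw [Real.dist_eq]
    have h1 : |(t - c⁻¹ * ‖x - p a‖) - (t - c⁻¹ * ‖x - p b‖)|
        = c⁻¹ * |‖x - p a‖ - ‖x - p b‖| := by
      rw [show (t - c⁻¹ * ‖x - p a‖) - (t - c⁻¹ * ‖x - p b‖)
            = c⁻¹ * (‖x - p b‖ - ‖x - p a‖) by ring,
        abs_mul, abs_of_pos (inv_pos.mpr hc), abs_sub_comm]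
    rw [h1]
    have h2 : |‖x - p a‖ - ‖x - p b‖| ≤ ‖p a - p b‖ := by
      have := abs_norm_sub_norm_le (x - p a) (x - p b)
      simpa [sub_sub_sub_cancel_left, norm_sub_rev (p b)] using this
    have h3 : ‖p a - p b‖ ≤ c₁ * |a - b| := by
      have := hplip.dist_le_mul a b
      simp [dist_eq_norm, Real.dist_eq] at this
      exact this
    have : (K : ℝ) = c₁ / c := rfl
    rw [this, Real.dist_eq]
    calc c⁻¹ * |‖x - p a‖ - ‖x - p b‖| ≤ c⁻¹ * (c₁ * |a - b|) := by
          apply mul_le_mul_of_nonneg_left (h2.trans h3) (by positivity)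
      _ = c₁ / c * |a - b| := by ring
  have hcontr : ContractingWith K g := ⟨hK1, hglip⟩
  have hiff : ∀ τ : ℝ, (c * (t - τ) = ‖x - p τ‖) ↔ Function.IsFixedPt g τ := by
    intro τ
    constructor
    · intro hτ
      simp only [Function.IsFixedPt, hg, ← hτ]
      field_simp
      ring
    · intro hτ
      simp only [Function.IsFixedPt, hg] at hτ
      have : t - c⁻¹ * ‖x - p τ‖ = τ := hτ
      have h3 : t - τ = c⁻¹ * ‖x - p τ‖ := by linarith
      rw [h3, ← mul_assoc, mul_inv_cancel₀ hc.ne', one_mul]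
  constructor
  · refine ⟨hcontr.fixedPoint g, ?_, ?_⟩
    · exact (hiff _).mpr hcontr.fixedPoint_isFixedPt
    · intro τ hτ
      exact hcontr.fixedPoint_unique ((hiff τ).mp hτ)
  · intro τ hτ
    nlinarith [norm_nonneg (x - p τ)]
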